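/- With the exponential family setup: for all θ ∈ Θ and all 1 ≤ i, j, k ≤ d, ∂_i ∂_j ∂_k F(θ) = E_θ[ (φ_i − ∂_iF(θ))(φ_j − ∂_jF(θ))(φ_k − ∂_kF(θ)) ]. Consequently, for every α ∈ ℝ, the Christoffel symbols of the first kind of the Amari–Čencov α-connection, Γ^{(α)}_{ij,k}(θ) = E_θ[ ( ∂_i∂_j ℓ(·,θ) + ((1−α)/2) ∂_iℓ(·,θ) ∂_jℓ(·,θ) ) ∂_kℓ(·,θ) ] with ℓ(x,θ) = h(x) + ⟨θ,φ(x)⟩ − F(θ), satisfy Γ^{(α)}_{ij,k}(θ) = ((1−α)/2) ∂_i∂_j∂_k F(θ). -/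

import Mathlib

open MeasureTheory
open scoped BigOperators

/-- Partial derivative in the `i`-th coordinate direction. -/
noncomputable def pderiv' (d : ℕ) (i : Fin d) (f : (Fin d → ℝ) → ℝ) (θ : Fin d → ℝ) : ℝ :=
  fderiv ℝ f θ (Pi.single i 1)

open Metric

noncomputable section

namespace Stmt11

variable {Ω : Type*} [MeasurableSpace Ω]

/-- exponential integrand -/
def eE (d : ℕ) (h : Ω → ℝ) (φ : Ω → Fin d → ℝ) (θ : Fin d → ℝ) (x : Ω) : ℝ :=
  Real.exp (h x + ∑ i, θ i * φ x i)

/-- ℓ¹ norm of φ -/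
def Nφ (d : ℕ) (φ : Ω → Fin d → ℝ) (x : Ω) : ℝ := ∑ i, |φ x i|

omit [MeasurableSpace Ω] in
lemma eE_pos {d h φ θ} (x : Ω) : 0 < eE d h φ θ x := Real.exp_pos _

omit [MeasurableSpace Ω] in
lemma Nφ_nonneg {d φ} (x : Ω) : 0 ≤ Nφ d φ x :=
  Finset.sum_nonneg fun _ _ => abs_nonneg _

omit [MeasurableSpace Ω] in
lemma abs_le_Nφ {d φ} (x : Ω) (i : Fin d) : |φ x i| ≤ Nφ d φ x :=
  Finset.single_le_sum (f := fun j => |φ x j|) (fun _ _ => abs_nonneg _) (Finset.mem_univ i)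

lemma measurable_eE {d : ℕ} {h : Ω → ℝ} {φ : Ω → Fin d → ℝ}
    (hh : Measurable h) (hφ : Measurable φ) (θ : Fin d → ℝ) :
    Measurable (eE d h φ θ) := by
  apply Measurable.exp
  exact hh.add (Finset.measurable_sum _ fun i _ =>
    ((measurable_pi_apply i).comp hφ).const_mul (θ i))

lemma measurable_Nφ {d : ℕ} {φ : Ω → Fin d → ℝ} (hφ : Measurable φ) :
    Measurable (Nφ d φ) :=
  Finset.measurable_sum _ fun i _ => ((measurable_pi_apply i).comp hφ).abs

/-- master integrability lemma -/
lemma master {μ : Measure Ω} {d : ℕ} {h : Ω → ℝ} {φ : Ω → Fin d → ℝ}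
    (hh : Measurable h) (hφ : Measurable φ) {θ : Fin d → ℝ}
    (hθ : θ ∈ interior {θ' : Fin d → ℝ | Integrable (eE d h φ θ') μ}) :
    ∃ δ > 0, ball θ δ ⊆ interior {θ' : Fin d → ℝ | Integrable (eE d h φ θ') μ} ∧
      ∀ m : ℕ, Integrable (fun x => Nφ d φ x ^ m * Real.exp (δ * Nφ d φ x) * eE d h φ θ x) μ := by
  obtain ⟨ε, εpos, hball⟩ := Metric.isOpen_iff.1 isOpen_interior θ hθ
  refine ⟨ε / 4, by positivity, fun y hy => hball (by
    simpa using hy.trans_le (by linarith)), fun m => ?_⟩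
  set δ := ε / 4 with hδ
  have δpos : (0:ℝ) < δ := by positivity
  -- the sum of the 2^d shifted exponentials
  have hmem : ∀ t : Finset (Fin d),
      Integrable (eE d h φ (fun i => θ i + (if i ∈ t then 2*δ else -(2*δ)))) μ := by
    intro t
    have hmem' : (fun i => θ i + (if i ∈ t then 2*δ else -(2*δ))) ∈
        interior {θ' : Fin d → ℝ | Integrable (eE d h φ θ') μ} := by
      apply hball
      rw [mem_ball, dist_pi_lt_iff εpos]
      intro i
      rw [Real.dist_eq]
      have habs : |(if i ∈ t then 2*δ else -(2*δ))| ≤ 2*δ := by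
        split
        · rw [abs_of_nonneg (by linarith)]
        · rw [abs_of_nonpos (by linarith)]; linarith
      calc |θ i + (if i ∈ t then 2*δ else -(2*δ)) - θ i| 
          = |(if i ∈ t then 2*δ else -(2*δ))| := by ring_nf
        _ ≤ 2 * δ := habs
        _ < ε := by rw [hδ]; linarith
    simpa using interior_subset hmem'
  have hsum : Integrable (fun x => ∑ t ∈ (Finset.univ : Finset (Fin d)).powerset,
      eE d h φ (fun i => θ i + (if i ∈ t then 2*δ else -(2*δ))) x) μ :=
    integrable_finset_sum _ fun t _ => hmem t
  -- pointwise bound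
  have hbound : ∀ x, Nφ d φ x ^ m * Real.exp (δ * Nφ d φ x) * eE d h φ θ x ≤
      (Nat.factorial m / δ ^ m) * ∑ t ∈ (Finset.univ : Finset (Fin d)).powerset,
        eE d h φ (fun i => θ i + (if i ∈ t then 2*δ else -(2*δ))) x := by
    intro x
    have hN := Nφ_nonneg (d := d) (φ := φ) x
    set N := Nφ d φ x with hNdef
    have h1 : N ^ m ≤ Nat.factorial m / δ ^ m * Real.exp (δ * N) := by
      have h0 := Real.pow_div_factorial_le_exp (x := δ * N) (by positivity) m
      rw [div_le_iff₀ (by positivity : (0:ℝ) < (Nat.factorial m : ℝ)), mul_pow] at h0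
      rw [div_mul_eq_mul_div, le_div_iff₀ (by positivity : (0:ℝ) < δ ^ m)]
      nlinarith
    have h2 : Real.exp (2 * δ * N) * eE d h φ θ x ≤
        ∑ t ∈ (Finset.univ : Finset (Fin d)).powerset,
          eE d h φ (fun i => θ i + (if i ∈ t then 2*δ else -(2*δ))) x := by
      have expand : Real.exp (2 * δ * N) = ∏ i, Real.exp (2 * δ * |φ x i|) := by
        rw [← Real.exp_sum, hNdef, Nφ, Finset.mul_sum]
      have step : ∏ i, Real.exp (2 * δ * |φ x i|) ≤
          ∏ i, (Real.exp (2 * δ * φ x i) + Real.exp (-(2 * δ) * φ x i)) := by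
        apply Finset.prod_le_prod (fun i _ => (Real.exp_pos _).le)
        intro i _
        rcases abs_cases (φ x i) with ⟨he, _⟩ | ⟨he, _⟩
        · rw [he]; linarith [Real.exp_pos (-(2*δ) * φ x i)]
        · rw [he, (by ring : 2*δ*(-φ x i) = -(2*δ)*φ x i)]
          linarith [Real.exp_pos ((2*δ) * φ x i)]
      rw [expand]
      calc (∏ i, Real.exp (2 * δ * |φ x i|)) * eE d h φ θ x
          ≤ (∏ i, (Real.exp (2 * δ * φ x i) + Real.exp (-(2 * δ) * φ x i))) * eE d h φ θ x :=
            mul_le_mul_of_nonneg_right step (eE_pos x).le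
        _ = ∑ t ∈ (Finset.univ : Finset (Fin d)).powerset,
            eE d h φ (fun i => θ i + (if i ∈ t then 2*δ else -(2*δ))) x := by
            rw [Finset.prod_add, Finset.sum_mul]
            apply Finset.sum_congr rfl
            intro t ht
            rw [← Real.exp_sum, ← Real.exp_sum, eE, eE, ← Real.exp_add, ← Real.exp_add]
            congr 1
            have hsplit : ∑ i, (if i ∈ t then 2*δ else -(2*δ)) * φ x i
                = ∑ i ∈ t, 2*δ*φ x i + ∑ i ∈ Finset.univ \ t, -(2*δ)*φ x i := by
              rw [← Finset.sum_sdiff (Finset.subset_univ t), add_comm]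
              congr 1
              · exact Finset.sum_congr rfl fun i hi => by rw [if_pos hi]
              · exact Finset.sum_congr rfl fun i hi => by
                  rw [if_neg (Finset.mem_sdiff.1 hi).2]
            have : ∑ i, (θ i + (if i ∈ t then 2*δ else -(2*δ))) * φ x i
                = ∑ i, θ i * φ x i + ∑ i, (if i ∈ t then 2*δ else -(2*δ)) * φ x i := by
              rw [← Finset.sum_add_distrib]
              exact Finset.sum_congr rfl fun i _ => by ring
            rw [this, hsplit]
            ring
    have hfinal : Real.exp (δ * N) * Real.exp (δ * N) = Real.exp (2 * δ * N) := by
      rw [← Real.exp_add]; ring_nf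
    calc N ^ m * Real.exp (δ * N) * eE d h φ θ x
        ≤ (Nat.factorial m / δ ^ m * Real.exp (δ * N)) * Real.exp (δ * N) * eE d h φ θ x := by
          have := Real.exp_pos (δ * N)
          have := eE_pos (d := d) (h := h) (φ := φ) (θ := θ) x
          apply mul_le_mul_of_nonneg_right (mul_le_mul_of_nonneg_right h1 (by positivity)) (by positivity)
      _ = Nat.factorial m / δ ^ m * (Real.exp (2 * δ * N) * eE d h φ θ x) := by
          rw [← hfinal]; ring
      _ ≤ Nat.factorial m / δ ^ m * ∑ t ∈ (Finset.univ : Finset (Fin d)).powerset,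
            eE d h φ (fun i => θ i + (if i ∈ t then 2*δ else -(2*δ))) x := by
          apply mul_le_mul_of_nonneg_left h2 (by positivity)
  apply Integrable.mono' (hsum.const_mul (Nat.factorial m / δ ^ m))
  · exact ((((measurable_Nφ hφ).pow_const m).mul
      (((measurable_Nφ hφ).const_mul δ).exp)).mul (measurable_eE hh hφ θ)).aestronglyMeasurable
  · refine Filter.Eventually.of_forall fun x => ?_
    have hN := Nφ_nonneg (d := d) (φ := φ) x
    have hE := (eE_pos (d := d) (h := h) (φ := φ) (θ := θ) x).le
    have hX := (Real.exp_pos (δ * Nφ d φ x)).le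
    rw [Real.norm_eq_abs, abs_of_nonneg (by positivity)]
    exact hbound x


/-- the linear functional `v ↦ ∑ i, φ x i * v i` -/
def Lphi (d : ℕ) (φ : Ω → Fin d → ℝ) (x : Ω) : (Fin d → ℝ) →L[ℝ] ℝ :=
  ∑ i, φ x i • ContinuousLinearMap.proj i

omit [MeasurableSpace Ω] in
lemma Lphi_apply {d φ} (x : Ω) (v : Fin d → ℝ) : Lphi d φ x v = ∑ i, φ x i * v i := by
  simp [Lphi]

omit [MeasurableSpace Ω] in
lemma Lphi_single {d φ} (x : Ω) (i : Fin d) : Lphi d φ x (Pi.single i 1) = φ x i := by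
  rw [Lphi_apply]
  rw [Finset.sum_eq_single i]
  · simp
  · intro j _ hj; simp [Pi.single_eq_of_ne hj]
  · simp

omit [MeasurableSpace Ω] in
lemma norm_Lphi_le {d φ} (x : Ω) : ‖Lphi d φ x‖ ≤ Nφ d φ x := by
  apply ContinuousLinearMap.opNorm_le_bound _ (Nφ_nonneg x)
  intro v
  rw [Lphi_apply, Real.norm_eq_abs]
  calc |∑ i, φ x i * v i| ≤ ∑ i, |φ x i * v i| := Finset.abs_sum_le_sum_abs _ _
    _ ≤ ∑ i, |φ x i| * ‖v‖ := by
        apply Finset.sum_le_sum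
        intro i _
        rw [abs_mul]
        exact mul_le_mul_of_nonneg_left (norm_le_pi_norm v i) (abs_nonneg _)
    _ = Nφ d φ x * ‖v‖ := by rw [Nφ, Finset.sum_mul]

lemma aesm_Lphi {d : ℕ} {φ : Ω → Fin d → ℝ} (hφ : Measurable φ) (μ : Measure Ω) :
    AEStronglyMeasurable (fun x => Lphi d φ x) μ := by
  unfold Lphi
  apply Finset.aestronglyMeasurable_fun_sum
  intro i _
  exact (((measurable_pi_apply i).comp hφ).aestronglyMeasurable).smul
    aestronglyMeasurable_const

omit [MeasurableSpace Ω] in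
lemma hasFDerivAt_eE {d : ℕ} {h : Ω → ℝ} {φ : Ω → Fin d → ℝ} (x : Ω) (θ' : Fin d → ℝ) :
    HasFDerivAt (fun θ'' => eE d h φ θ'' x) (eE d h φ θ' x • Lphi d φ x) θ' := by
  have hfun : (fun θ'' : Fin d → ℝ => ∑ i, θ'' i * φ x i) = fun θ'' => Lphi d φ x θ'' := by
    funext v; rw [Lphi_apply]; exact Finset.sum_congr rfl fun i _ => mul_comm _ _
  have hlin : HasFDerivAt (fun θ'' : Fin d → ℝ => ∑ i, θ'' i * φ x i) (Lphi d φ x) θ' := by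
    rw [hfun]; exact (Lphi d φ x).hasFDerivAt
  have := (hlin.const_add (h x)).exp
  simpa [eE] using this

set_option maxHeartbeats 1000000 in
/-- differentiation under the integral sign -/
lemma key {μ : Measure Ω} {d : ℕ} {h : Ω → ℝ} {φ : Ω → Fin d → ℝ}
    (hh : Measurable h) (hφ : Measurable φ) {θ : Fin d → ℝ}
    (hθ : θ ∈ interior {θ' : Fin d → ℝ | Integrable (eE d h φ θ') μ})
    (c : Ω → ℝ) (hc : Measurable c) (m : ℕ) (C : ℝ) (hbd : ∀ x, |c x| ≤ C * Nφ d φ x ^ m) :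
    Integrable (fun x => c x * eE d h φ θ x) μ ∧
    Integrable (fun x => (c x * eE d h φ θ x) • Lphi d φ x) μ ∧
    HasFDerivAt (fun θ' => ∫ x, c x * eE d h φ θ' x ∂μ)
      (∫ x, (c x * eE d h φ θ x) • Lphi d φ x ∂μ) θ := by
  obtain ⟨δ, δpos, hball, hint⟩ := master hh hφ hθ
  have hCnn : ∀ x, C * Nφ d φ x ^ m ≤ |C| * Nφ d φ x ^ m := fun x =>
    mul_le_mul_of_nonneg_right (le_abs_self C)
      (pow_nonneg (Nφ_nonneg (d:=d) (φ:=φ) x) m)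
  have hone : ∀ x, (1:ℝ) ≤ Real.exp (δ * Nφ d φ x) := fun x =>
    Real.one_le_exp (mul_nonneg δpos.le (Nφ_nonneg (d:=d) (φ:=φ) x))
  -- integrability of c * e θ
  have hint1 : Integrable (fun x => c x * eE d h φ θ x) μ := by
    apply Integrable.mono' ((hint m).const_mul |C|)
      ((hc.mul (measurable_eE hh hφ θ)).aestronglyMeasurable)
    refine Filter.Eventually.of_forall fun x => ?_
    have hN := Nφ_nonneg (d := d) (φ := φ) x
    have hE := (eE_pos (d := d) (h := h) (φ := φ) (θ := θ) x)
    rw [Real.norm_eq_abs, Pi.mul_apply, abs_mul, abs_of_pos hE]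
    calc |c x| * eE d h φ θ x ≤ (|C| * Nφ d φ x ^ m) * eE d h φ θ x :=
          mul_le_mul_of_nonneg_right ((hbd x).trans (hCnn x)) hE.le
      _ ≤ |C| * (Nφ d φ x ^ m * Real.exp (δ * Nφ d φ x) * eE d h φ θ x) := by
          have h1 := hone x
          nlinarith [abs_nonneg C, pow_nonneg hN m, hE.le,
            mul_nonneg (mul_nonneg (abs_nonneg C) (pow_nonneg hN m)) hE.le]
  -- integrability of the derivative integrand at any θ'' close enough, with bound
  have hbd2 : ∀ θ'' ∈ ball θ (δ/2), ∀ x,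
      ‖(c x * eE d h φ θ'' x) • Lphi d φ x‖ ≤
        |C| * (Nφ d φ x ^ (m+1) * Real.exp (δ * Nφ d φ x) * eE d h φ θ x) := by
    intro θ'' hθ'' x
    have hN := Nφ_nonneg (d := d) (φ := φ) x
    have hE := (eE_pos (d := d) (h := h) (φ := φ) (θ := θ) x)
    have hE'' := (eE_pos (d := d) (h := h) (φ := φ) (θ := θ'') x)
    have hshift : eE d h φ θ'' x ≤ Real.exp (δ * Nφ d φ x) * eE d h φ θ x := by
      rw [eE, eE, ← Real.exp_add]
      apply Real.exp_le_exp.2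
      have : ∑ i, θ'' i * φ x i - ∑ i, θ i * φ x i ≤ δ * Nφ d φ x := by
        rw [← Finset.sum_sub_distrib]
        calc ∑ i, (θ'' i * φ x i - θ i * φ x i) = ∑ i, (θ'' i - θ i) * φ x i := by
              exact Finset.sum_congr rfl fun i _ => by ring
          _ ≤ ∑ i, δ * |φ x i| := by
              apply Finset.sum_le_sum
              intro i _
              calc (θ'' i - θ i) * φ x i ≤ |(θ'' i - θ i) * φ x i| := le_abs_self _
                _ = |θ'' i - θ i| * |φ x i| := abs_mul _ _
                _ ≤ δ * |φ x i| := by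
                    apply mul_le_mul_of_nonneg_right _ (abs_nonneg _)
                    have := (dist_le_pi_dist θ'' θ i).trans (mem_ball.1 hθ'').le
                    rw [Real.dist_eq] at this
                    linarith
          _ = δ * Nφ d φ x := by rw [Nφ, Finset.mul_sum]
      linarith
    calc ‖(c x * eE d h φ θ'' x) • Lphi d φ x‖
        = |c x * eE d h φ θ'' x| * ‖Lphi d φ x‖ := by rw [← Real.norm_eq_abs]; exact norm_smul (c x * eE d h φ θ'' x) (Lphi d φ x)
      _ ≤ (|C| * Nφ d φ x ^ m * eE d h φ θ'' x) * Nφ d φ x := by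
          apply mul_le_mul _ (norm_Lphi_le x) (norm_nonneg _) (by positivity)
          rw [abs_mul, abs_of_pos hE'']
          exact mul_le_mul_of_nonneg_right ((hbd x).trans (hCnn x)) hE''.le
      _ ≤ (|C| * Nφ d φ x ^ m * (Real.exp (δ * Nφ d φ x) * eE d h φ θ x)) * Nφ d φ x := by
          apply mul_le_mul_of_nonneg_right _ hN
          exact mul_le_mul_of_nonneg_left hshift (by positivity)
      _ = |C| * (Nφ d φ x ^ (m+1) * Real.exp (δ * Nφ d φ x) * eE d h φ θ x) := by ring
  have hint2 : Integrable (fun x => (c x * eE d h φ θ x) • Lphi d φ x) μ := by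
    apply Integrable.mono' (((hint (m+1)).const_mul |C|))
      (((hc.mul (measurable_eE hh hφ θ)).aestronglyMeasurable).smul (aesm_Lphi hφ μ))
    exact Filter.Eventually.of_forall fun x =>
      hbd2 θ (mem_ball_self (by linarith)) x
  refine ⟨hint1, hint2, ?_⟩
  apply hasFDerivAt_integral_of_dominated_of_fderiv_le
    (F' := fun θ'' x => (c x * eE d h φ θ'' x) • Lphi d φ x)
    (bound := fun x => |C| * (Nφ d φ x ^ (m+1) * Real.exp (δ * Nφ d φ x) * eE d h φ θ x))
    (ball_mem_nhds θ (show (0:ℝ) < δ/2 by linarith))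
  · exact Filter.Eventually.of_forall fun θ'' =>
      (hc.mul (measurable_eE hh hφ θ'')).aestronglyMeasurable
  · exact hint1
  · exact ((hc.mul (measurable_eE hh hφ θ)).aestronglyMeasurable).smul (aesm_Lphi hφ μ)
  · exact Filter.Eventually.of_forall fun x θ'' hθ'' => hbd2 θ'' hθ'' x
  · exact (hint (m+1)).const_mul |C|
  · refine Filter.Eventually.of_forall fun x θ'' _ => ?_
    have := (hasFDerivAt_eE (h := h) (φ := φ) x θ'').const_mul (c x)
    simpa [smul_smul] using this


/-- quotient rule for Fréchet derivatives (scalar-valued) -/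
lemma hasFDerivAt_div' {E : Type*} [NormedAddCommGroup E] [NormedSpace ℝ E]
    {f g : E → ℝ} {f' g' : E →L[ℝ] ℝ} {x : E}
    (hf : HasFDerivAt f f' x) (hg : HasFDerivAt g g' x) (hx : g x ≠ 0) :
    HasFDerivAt (fun y => f y / g y) ((g x)⁻¹ • f' - (f x / g x ^ 2) • g') x := by
  have hinv : HasFDerivAt (fun y => (g y)⁻¹) ((-(g x ^ 2)⁻¹) • g') x :=
    (hasDerivAt_inv hx).comp_hasFDerivAt x hg
  have hmul := hf.mul hinv
  simp only [Pi.mul_def] at hmul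
  simp only [div_eq_mul_inv]
  refine hmul.congr_fderiv ?_
  ext v
  simp only [ContinuousLinearMap.coe_sub', Pi.sub_apply, ContinuousLinearMap.coe_smul',
    Pi.smul_apply, smul_eq_mul, ContinuousLinearMap.add_apply]
  ring

lemma Z_pos {μ : Measure Ω} {d : ℕ} {h : Ω → ℝ} {φ : Ω → Fin d → ℝ}
    (hμ : μ ≠ 0) {θ : Fin d → ℝ} (hθ : Integrable (eE d h φ θ) μ) :
    0 < ∫ x, eE d h φ θ x ∂μ := by
  rw [integral_pos_iff_support_of_nonneg_ae
    (Filter.Eventually.of_forall fun x => (eE_pos x).le) hθ]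
  have : Function.support (eE d h φ θ) = Set.univ := by
    ext x; simp [Function.mem_support, (eE_pos (d := d) (h := h) (φ := φ) (θ := θ) x).ne']
  rw [this]
  exact Measure.measure_univ_pos.2 hμ

omit [MeasurableSpace Ω] in
lemma hasFDerivAt_lin {d : ℕ} {φ : Ω → Fin d → ℝ} (x : Ω) (θ : Fin d → ℝ) :
    HasFDerivAt (fun θ' : Fin d → ℝ => ∑ m, θ' m * φ x m) (Lphi d φ x) θ := by
  have hfun : (fun θ'' : Fin d → ℝ => ∑ m, θ'' m * φ x m) = fun θ'' => Lphi d φ x θ'' := by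
    funext v; rw [Lphi_apply]; exact Finset.sum_congr rfl fun m _ => mul_comm _ _
  rw [hfun]; exact (Lphi d φ x).hasFDerivAt

/-- congruence for integrals -/
lemma intc {μ : Measure Ω} (f g : Ω → ℝ) (hfg : ∀ x, f x = g x) :
    ∫ x, f x ∂μ = ∫ x, g x ∂μ := by
  congr 1; exact funext hfg

/-- evaluation of the derivative integral at a basis direction -/
lemma app {μ : Measure Ω} {d : ℕ} {h : Ω → ℝ} {φ : Ω → Fin d → ℝ} (c : Ω → ℝ)
    (θ : Fin d → ℝ)
    (hc2 : Integrable (fun x => (c x * eE d h φ θ x) • Lphi d φ x) μ) (i : Fin d) :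
    (∫ x, (c x * eE d h φ θ x) • Lphi d φ x ∂μ) (Pi.single i 1)
      = ∫ x, c x * φ x i * eE d h φ θ x ∂μ := by
  rw [ContinuousLinearMap.integral_apply hc2]
  refine intc _ _ fun x => ?_
  rw [ContinuousLinearMap.smul_apply, Lphi_single, smul_eq_mul]
  ring


omit [MeasurableSpace Ω] in
lemma bd0 {d : ℕ} {φ : Ω → Fin d → ℝ} :
    ∀ x : Ω, |(1:ℝ)| ≤ 1 * Nφ d φ x ^ 0 := fun x => by simp

omit [MeasurableSpace Ω] in
lemma bd1 {d : ℕ} {φ : Ω → Fin d → ℝ} (i : Fin d) :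
    ∀ x : Ω, |φ x i| ≤ 1 * Nφ d φ x ^ 1 := fun x => by
  simpa using abs_le_Nφ x i

omit [MeasurableSpace Ω] in
lemma bd2 {d : ℕ} {φ : Ω → Fin d → ℝ} (i j : Fin d) :
    ∀ x : Ω, |φ x i * φ x j| ≤ 1 * Nφ d φ x ^ 2 := fun x => by
  rw [abs_mul, one_mul, pow_two]
  exact mul_le_mul (abs_le_Nφ x i) (abs_le_Nφ x j) (abs_nonneg _) (Nφ_nonneg x)

omit [MeasurableSpace Ω] in
lemma bd3 {d : ℕ} {φ : Ω → Fin d → ℝ} (i j k : Fin d) :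
    ∀ x : Ω, |φ x i * φ x j * φ x k| ≤ 1 * Nφ d φ x ^ 3 := fun x => by
  rw [abs_mul, one_mul]
  calc |φ x i * φ x j| * |φ x k| ≤ Nφ d φ x ^ 2 * Nφ d φ x :=
        mul_le_mul (by simpa using bd2 i j x) (abs_le_Nφ x k) (abs_nonneg _)
          (pow_nonneg (Nφ_nonneg x) 2)
    _ = Nφ d φ x ^ 3 := by ring

/-- derivative of a quotient `θ' ↦ (∫ c·e_θ')/(∫ e_θ')`, with directional values -/
lemma hasFDerivAt_Q {μ : Measure Ω} {d : ℕ} {h : Ω → ℝ} {φ : Ω → Fin d → ℝ}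
    (hh : Measurable h) (hφ : Measurable φ) (hμ : μ ≠ 0) {θ : Fin d → ℝ}
    (hθ : θ ∈ interior {θ' : Fin d → ℝ | Integrable (eE d h φ θ') μ})
    (c : Ω → ℝ) (hc : Measurable c) (m : ℕ) (C : ℝ) (hbd : ∀ x, |c x| ≤ C * Nφ d φ x ^ m) :
    ∃ L : (Fin d → ℝ) →L[ℝ] ℝ,
      HasFDerivAt (fun θ' => (∫ x, c x * eE d h φ θ' x ∂μ) / (∫ x, eE d h φ θ' x ∂μ)) L θ ∧
      ∀ i, L (Pi.single i 1)
        = (∫ x, c x * φ x i * eE d h φ θ x ∂μ) / (∫ x, eE d h φ θ x ∂μ)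
          - (∫ x, c x * eE d h φ θ x ∂μ) * (∫ x, φ x i * eE d h φ θ x ∂μ)
            / (∫ x, eE d h φ θ x ∂μ) ^ 2 := by
  obtain ⟨hc1, hc2, hc3⟩ := key hh hφ hθ c hc m C hbd
  obtain ⟨h01, h02, h03⟩ := key hh hφ hθ (fun _ => (1:ℝ)) measurable_const 0 1 bd0
  have hDθ : Integrable (eE d h φ θ) μ := by simpa using interior_subset hθ
  have hpos := Z_pos hμ hDθ
  have hone : (fun θ' => ∫ x, (1:ℝ) * eE d h φ θ' x ∂μ)
      = fun θ' => ∫ x, eE d h φ θ' x ∂μ :=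
    funext fun θ' => intc _ _ fun x => one_mul _
  have h03' : HasFDerivAt (fun θ' => ∫ x, eE d h φ θ' x ∂μ)
      (∫ x, ((1:ℝ) * eE d h φ θ x) • Lphi d φ x ∂μ) θ := hone ▸ h03
  have hdiv := hasFDerivAt_div' hc3 h03' hpos.ne'
  refine ⟨_, hdiv, fun i => ?_⟩
  rw [ContinuousLinearMap.sub_apply, ContinuousLinearMap.smul_apply,
    ContinuousLinearMap.smul_apply, app c θ hc2 i, app (fun _ => (1:ℝ)) θ h02 i,
    smul_eq_mul, smul_eq_mul]
  rw [intc (fun x => (1:ℝ) * φ x i * eE d h φ θ x) (fun x => φ x i * eE d h φ θ x)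
    (fun x => by ring)]
  field_simp
  try ring

/-- derivative of `F` with directional values -/
lemma hasFDerivAt_F {μ : Measure Ω} {d : ℕ} {h : Ω → ℝ} {φ : Ω → Fin d → ℝ}
    (hh : Measurable h) (hφ : Measurable φ) (hμ : μ ≠ 0) {F : (Fin d → ℝ) → ℝ}
    (hF : ∀ θ', F θ' = Real.log (∫ x, Real.exp (h x + ∑ i, θ' i * φ x i) ∂μ))
    {θ : Fin d → ℝ}
    (hθ : θ ∈ interior {θ' : Fin d → ℝ | Integrable (eE d h φ θ') μ}) :
    ∃ L : (Fin d → ℝ) →L[ℝ] ℝ,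
      HasFDerivAt F L θ ∧
      ∀ k, L (Pi.single k 1)
        = (∫ x, φ x k * eE d h φ θ x ∂μ) / (∫ x, eE d h φ θ x ∂μ) := by
  obtain ⟨h01, h02, h03⟩ := key hh hφ hθ (fun _ => (1:ℝ)) measurable_const 0 1 bd0
  have hDθ : Integrable (eE d h φ θ) μ := by simpa using interior_subset hθ
  have hpos := Z_pos hμ hDθ
  have hone : (fun θ' => ∫ x, (1:ℝ) * eE d h φ θ' x ∂μ)
      = fun θ' => ∫ x, eE d h φ θ' x ∂μ :=
    funext fun θ' => intc _ _ fun x => one_mul _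
  have h03' : HasFDerivAt (fun θ' => ∫ x, eE d h φ θ' x ∂μ)
      (∫ x, ((1:ℝ) * eE d h φ θ x) • Lphi d φ x ∂μ) θ := hone ▸ h03
  have hFfun : F = fun θ' => Real.log (∫ x, eE d h φ θ' x ∂μ) :=
    funext fun θ' => by rw [hF θ']; rfl
  have hlog := h03'.log hpos.ne'
  rw [← hFfun] at hlog
  refine ⟨_, hlog, fun k => ?_⟩
  rw [ContinuousLinearMap.smul_apply, app (fun _ => (1:ℝ)) θ h02 k, smul_eq_mul]
  rw [intc (fun x => (1:ℝ) * φ x k * eE d h φ θ x) (fun x => φ x k * eE d h φ θ x)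
    (fun x => by ring)]
  rw [inv_mul_eq_div]

/-- first partial of F -/
lemma pderiv_F {μ : Measure Ω} {d : ℕ} {h : Ω → ℝ} {φ : Ω → Fin d → ℝ}
    (hh : Measurable h) (hφ : Measurable φ) (hμ : μ ≠ 0) {F : (Fin d → ℝ) → ℝ}
    (hF : ∀ θ', F θ' = Real.log (∫ x, Real.exp (h x + ∑ i, θ' i * φ x i) ∂μ))
    {θ : Fin d → ℝ}
    (hθ : θ ∈ interior {θ' : Fin d → ℝ | Integrable (eE d h φ θ') μ}) (k : Fin d) :
    pderiv' d k F θ = (∫ x, φ x k * eE d h φ θ x ∂μ) / (∫ x, eE d h φ θ x ∂μ) := by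
  obtain ⟨L, hL, hLv⟩ := hasFDerivAt_F hh hφ hμ hF hθ
  rw [pderiv', hL.fderiv, hLv]


/-- second partial of F -/
lemma pderiv2_F {μ : Measure Ω} {d : ℕ} {h : Ω → ℝ} {φ : Ω → Fin d → ℝ}
    (hh : Measurable h) (hφ : Measurable φ) (hμ : μ ≠ 0) {F : (Fin d → ℝ) → ℝ}
    (hF : ∀ θ', F θ' = Real.log (∫ x, Real.exp (h x + ∑ i, θ' i * φ x i) ∂μ))
    {θ : Fin d → ℝ}
    (hθ : θ ∈ interior {θ' : Fin d → ℝ | Integrable (eE d h φ θ') μ}) (j k : Fin d) :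
    pderiv' d j (fun θ'' => pderiv' d k F θ'') θ
      = (∫ x, φ x k * φ x j * eE d h φ θ x ∂μ) / (∫ x, eE d h φ θ x ∂μ)
        - ((∫ x, φ x k * eE d h φ θ x ∂μ) / (∫ x, eE d h φ θ x ∂μ))
          * ((∫ x, φ x j * eE d h φ θ x ∂μ) / (∫ x, eE d h φ θ x ∂μ)) := by
  have hEq : (fun θ'' => pderiv' d k F θ'') =ᶠ[nhds θ]
      (fun θ'' => (∫ x, φ x k * eE d h φ θ'' x ∂μ) / (∫ x, eE d h φ θ'' x ∂μ)) := by
    filter_upwards [isOpen_interior.mem_nhds hθ] with θ'' h''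
      using pderiv_F hh hφ hμ hF h'' k
  rw [pderiv', hEq.fderiv_eq]
  obtain ⟨L, hL, hLv⟩ := hasFDerivAt_Q hh hφ hμ hθ (fun x => φ x k)
    ((measurable_pi_apply k).comp hφ) 1 1 (bd1 k)
  rw [hL.fderiv, hLv j]
  have hDθ : Integrable (eE d h φ θ) μ := by simpa using interior_subset hθ
  have hpos := Z_pos hμ hDθ
  field_simp

/-- third partial of F -/
lemma pderiv3_F {μ : Measure Ω} {d : ℕ} {h : Ω → ℝ} {φ : Ω → Fin d → ℝ}
    (hh : Measurable h) (hφ : Measurable φ) (hμ : μ ≠ 0) {F : (Fin d → ℝ) → ℝ}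
    (hF : ∀ θ', F θ' = Real.log (∫ x, Real.exp (h x + ∑ i, θ' i * φ x i) ∂μ))
    {θ : Fin d → ℝ}
    (hθ : θ ∈ interior {θ' : Fin d → ℝ | Integrable (eE d h φ θ') μ}) (i j k : Fin d) :
    pderiv' d i (fun θ' => pderiv' d j (fun θ'' => pderiv' d k F θ'') θ') θ
      = ((∫ x, φ x k * φ x j * φ x i * eE d h φ θ x ∂μ) / (∫ x, eE d h φ θ x ∂μ)
          - (∫ x, φ x k * φ x j * eE d h φ θ x ∂μ) * (∫ x, φ x i * eE d h φ θ x ∂μ)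
            / (∫ x, eE d h φ θ x ∂μ) ^ 2)
        - (((∫ x, φ x k * eE d h φ θ x ∂μ) / (∫ x, eE d h φ θ x ∂μ))
            * ((∫ x, φ x j * φ x i * eE d h φ θ x ∂μ) / (∫ x, eE d h φ θ x ∂μ)
              - (∫ x, φ x j * eE d h φ θ x ∂μ) * (∫ x, φ x i * eE d h φ θ x ∂μ)
                / (∫ x, eE d h φ θ x ∂μ) ^ 2)
          + ((∫ x, φ x j * eE d h φ θ x ∂μ) / (∫ x, eE d h φ θ x ∂μ))
            * ((∫ x, φ x k * φ x i * eE d h φ θ x ∂μ) / (∫ x, eE d h φ θ x ∂μ)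
              - (∫ x, φ x k * eE d h φ θ x ∂μ) * (∫ x, φ x i * eE d h φ θ x ∂μ)
                / (∫ x, eE d h φ θ x ∂μ) ^ 2)) := by
  have hEq : (fun θ' => pderiv' d j (fun θ'' => pderiv' d k F θ'') θ') =ᶠ[nhds θ]
      (fun θ' => (∫ x, φ x k * φ x j * eE d h φ θ' x ∂μ) / (∫ x, eE d h φ θ' x ∂μ)
        - ((∫ x, φ x k * eE d h φ θ' x ∂μ) / (∫ x, eE d h φ θ' x ∂μ))
          * ((∫ x, φ x j * eE d h φ θ' x ∂μ) / (∫ x, eE d h φ θ' x ∂μ))) := by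
    filter_upwards [isOpen_interior.mem_nhds hθ] with θ' h'
      using pderiv2_F hh hφ hμ hF h' j k
  rw [pderiv', hEq.fderiv_eq]
  obtain ⟨L1, hL1, hv1⟩ := hasFDerivAt_Q hh hφ hμ hθ (fun x => φ x k * φ x j)
    (((measurable_pi_apply k).comp hφ).mul ((measurable_pi_apply j).comp hφ)) 2 1 (bd2 k j)
  obtain ⟨L2, hL2, hv2⟩ := hasFDerivAt_Q hh hφ hμ hθ (fun x => φ x k)
    ((measurable_pi_apply k).comp hφ) 1 1 (bd1 k)
  obtain ⟨L3, hL3, hv3⟩ := hasFDerivAt_Q hh hφ hμ hθ (fun x => φ x j)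
    ((measurable_pi_apply j).comp hφ) 1 1 (bd1 j)
  have hG := hL1.sub (hL2.mul hL3)
  simp only [Pi.sub_def, Pi.mul_def] at hG
  rw [hG.fderiv]
  rw [ContinuousLinearMap.sub_apply, ContinuousLinearMap.add_apply,
    ContinuousLinearMap.smul_apply, ContinuousLinearMap.smul_apply,
    smul_eq_mul, smul_eq_mul, hv1 i, hv2 i, hv3 i]
  try ring


/-- first partial of the log-likelihood in θ -/
lemma pderiv_ell {μ : Measure Ω} {d : ℕ} {h : Ω → ℝ} {φ : Ω → Fin d → ℝ}
    (hh : Measurable h) (hφ : Measurable φ) (hμ : μ ≠ 0) {F : (Fin d → ℝ) → ℝ}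
    (hF : ∀ θ', F θ' = Real.log (∫ x, Real.exp (h x + ∑ i, θ' i * φ x i) ∂μ))
    {θ : Fin d → ℝ}
    (hθ : θ ∈ interior {θ' : Fin d → ℝ | Integrable (eE d h φ θ') μ}) (x : Ω) (i : Fin d) :
    pderiv' d i (fun θ' => h x + ∑ m, θ' m * φ x m - F θ') θ
      = φ x i - (∫ y, φ y i * eE d h φ θ y ∂μ) / (∫ y, eE d h φ θ y ∂μ) := by
  obtain ⟨L, hL, hLv⟩ := hasFDerivAt_F hh hφ hμ hF hθ
  have hd := ((hasFDerivAt_lin (φ := φ) x θ).const_add (h x)).sub hL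
  simp only [Pi.sub_def] at hd
  rw [pderiv', hd.fderiv, ContinuousLinearMap.sub_apply, Lphi_single, hLv i]

/-- second partial of the log-likelihood in θ -/
lemma pderiv2_ell {μ : Measure Ω} {d : ℕ} {h : Ω → ℝ} {φ : Ω → Fin d → ℝ}
    (hh : Measurable h) (hφ : Measurable φ) (hμ : μ ≠ 0) {F : (Fin d → ℝ) → ℝ}
    (hF : ∀ θ', F θ' = Real.log (∫ x, Real.exp (h x + ∑ i, θ' i * φ x i) ∂μ))
    {θ : Fin d → ℝ}
    (hθ : θ ∈ interior {θ' : Fin d → ℝ | Integrable (eE d h φ θ') μ}) (x : Ω) (i j : Fin d) :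
    pderiv' d i (fun θ' => pderiv' d j (fun θ'' => h x + ∑ m, θ'' m * φ x m - F θ'') θ') θ
      = -((∫ y, φ y j * φ y i * eE d h φ θ y ∂μ) / (∫ y, eE d h φ θ y ∂μ)
          - (∫ y, φ y j * eE d h φ θ y ∂μ) * (∫ y, φ y i * eE d h φ θ y ∂μ)
            / (∫ y, eE d h φ θ y ∂μ) ^ 2) := by
  have hEq : (fun θ' => pderiv' d j (fun θ'' => h x + ∑ m, θ'' m * φ x m - F θ'') θ')
      =ᶠ[nhds θ] (fun θ' => φ x j -
        (∫ y, φ y j * eE d h φ θ' y ∂μ) / (∫ y, eE d h φ θ' y ∂μ)) := by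
    filter_upwards [isOpen_interior.mem_nhds hθ] with θ' h'
      using pderiv_ell hh hφ hμ hF h' x j
  rw [pderiv', hEq.fderiv_eq]
  obtain ⟨L, hL, hLv⟩ := hasFDerivAt_Q hh hφ hμ hθ (fun y => φ y j)
    ((measurable_pi_apply j).comp hφ) 1 1 (bd1 j)
  have hd := (hasFDerivAt_const (φ x j) θ).sub hL
  simp only [Pi.sub_def] at hd
  rw [hd.fderiv, ContinuousLinearMap.sub_apply, ContinuousLinearMap.zero_apply, hLv i]
  ring

/-- expansion of the third central moment integral -/
lemma expand {μ : Measure Ω} {d : ℕ} {h : Ω → ℝ} {φ : Ω → Fin d → ℝ}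
    (hh : Measurable h) (hφ : Measurable φ) {θ : Fin d → ℝ}
    (hθ : θ ∈ interior {θ' : Fin d → ℝ | Integrable (eE d h φ θ') μ})
    (i j k : Fin d) (a b c' : ℝ) :
    Integrable (fun x => (φ x i - a) * (φ x j - b) * (φ x k - c') * eE d h φ θ x) μ ∧
    (∫ x, (φ x i - a) * (φ x j - b) * (φ x k - c') * eE d h φ θ x ∂μ)
      = (∫ x, φ x i * φ x j * φ x k * eE d h φ θ x ∂μ)
        - (a * ∫ x, φ x j * φ x k * eE d h φ θ x ∂μ
           + b * ∫ x, φ x i * φ x k * eE d h φ θ x ∂μ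
           + c' * ∫ x, φ x i * φ x j * eE d h φ θ x ∂μ)
        + (a * b * ∫ x, φ x k * eE d h φ θ x ∂μ
           + a * c' * ∫ x, φ x j * eE d h φ θ x ∂μ
           + b * c' * ∫ x, φ x i * eE d h φ θ x ∂μ)
        - a * b * c' * ∫ x, eE d h φ θ x ∂μ := by
  have mi : ∀ l : Fin d, Measurable (fun x => φ x l) := fun l => (measurable_pi_apply l).comp hφ
  have hI3 : Integrable (fun x => (φ x i * φ x j * φ x k) * eE d h φ θ x) μ :=
    (key hh hφ hθ _ (((mi i).mul (mi j)).mul (mi k)) 3 1 (bd3 i j k)).1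
  have hI2jk : Integrable (fun x => (φ x j * φ x k) * eE d h φ θ x) μ :=
    (key hh hφ hθ _ ((mi j).mul (mi k)) 2 1 (bd2 j k)).1
  have hI2ik : Integrable (fun x => (φ x i * φ x k) * eE d h φ θ x) μ :=
    (key hh hφ hθ _ ((mi i).mul (mi k)) 2 1 (bd2 i k)).1
  have hI2ij : Integrable (fun x => (φ x i * φ x j) * eE d h φ θ x) μ :=
    (key hh hφ hθ _ ((mi i).mul (mi j)) 2 1 (bd2 i j)).1
  have hI1i : Integrable (fun x => φ x i * eE d h φ θ x) μ :=
    (key hh hφ hθ _ (mi i) 1 1 (bd1 i)).1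
  have hI1j : Integrable (fun x => φ x j * eE d h φ θ x) μ :=
    (key hh hφ hθ _ (mi j) 1 1 (bd1 j)).1
  have hI1k : Integrable (fun x => φ x k * eE d h φ θ x) μ :=
    (key hh hφ hθ _ (mi k) 1 1 (bd1 k)).1
  have hI0 : Integrable (eE d h φ θ) μ := by simpa using interior_subset hθ
  have hY1 := hI2jk.const_mul a
  have hY2 := hI2ik.const_mul b
  have hY3 := hI2ij.const_mul c'
  have hZ1 := hI1k.const_mul (a*b)
  have hZ2 := hI1j.const_mul (a*c')
  have hZ3 := hI1i.const_mul (b*c')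
  have hW := hI0.const_mul (a*b*c')
  have hY12 : Integrable (fun x => a * (φ x j * φ x k * eE d h φ θ x)
      + b * (φ x i * φ x k * eE d h φ θ x)) μ := hY1.add hY2
  have hZ12 : Integrable (fun x => a * b * (φ x k * eE d h φ θ x)
      + a * c' * (φ x j * eE d h φ θ x)) μ := hZ1.add hZ2
  have hY : Integrable (fun x => a * (φ x j * φ x k * eE d h φ θ x)
      + b * (φ x i * φ x k * eE d h φ θ x) + c' * (φ x i * φ x j * eE d h φ θ x)) μ :=
    (hY1.add hY2).add hY3
  have hZ : Integrable (fun x => a * b * (φ x k * eE d h φ θ x)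
      + a * c' * (φ x j * eE d h φ θ x) + b * c' * (φ x i * eE d h φ θ x)) μ :=
    (hZ1.add hZ2).add hZ3
  have hXY : Integrable (fun x => φ x i * φ x j * φ x k * eE d h φ θ x
      - (a * (φ x j * φ x k * eE d h φ θ x) + b * (φ x i * φ x k * eE d h φ θ x)
         + c' * (φ x i * φ x j * eE d h φ θ x))) μ := hI3.sub hY
  have hXYZ : Integrable (fun x => φ x i * φ x j * φ x k * eE d h φ θ x
      - (a * (φ x j * φ x k * eE d h φ θ x) + b * (φ x i * φ x k * eE d h φ θ x)
         + c' * (φ x i * φ x j * eE d h φ θ x))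
      + (a * b * (φ x k * eE d h φ θ x) + a * c' * (φ x j * eE d h φ θ x)
         + b * c' * (φ x i * eE d h φ θ x))) μ := hXY.add hZ
  have hprod : (fun x => (φ x i - a) * (φ x j - b) * (φ x k - c') * eE d h φ θ x)
      = fun x => ((φ x i * φ x j * φ x k * eE d h φ θ x
          - (a * (φ x j * φ x k * eE d h φ θ x) + b * (φ x i * φ x k * eE d h φ θ x)
             + c' * (φ x i * φ x j * eE d h φ θ x)))
          + (a * b * (φ x k * eE d h φ θ x) + a * c' * (φ x j * eE d h φ θ x)
             + b * c' * (φ x i * eE d h φ θ x)))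
          - a * b * c' * eE d h φ θ x := funext fun x => by ring
  constructor
  · rw [hprod]; exact hXYZ.sub hW
  · rw [hprod, integral_sub hXYZ hW, integral_add hXY hZ, integral_sub hI3 hY,
      integral_add hY12 hY3, integral_add hY1 hY2,
      integral_add hZ12 hZ3, integral_add hZ1 hZ2,
      integral_const_mul, integral_const_mul, integral_const_mul, integral_const_mul,
      integral_const_mul, integral_const_mul, integral_const_mul]

end Stmt11

end

open Stmt11

set_option maxHeartbeats 2000000 in
/-- For an exponential family `p_θ = exp(h + ⟨θ,φ⟩ − F(θ))`, the third
derivatives of the log-partition function are the third central moments,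
`∂_i∂_j∂_k F(θ) = E_θ[(φ_i − ∂_iF)(φ_j − ∂_jF)(φ_k − ∂_kF)]`, and consequently for every
`α ∈ ℝ` the α-connection Christoffel symbols of the first kind satisfy
`Γ^{(α)}_{ij,k}(θ) = ((1−α)/2) ∂_i∂_j∂_k F(θ)`. -/
theorem stmt11 {Ω : Type*} [MeasurableSpace Ω] (μ : Measure Ω) [SigmaFinite μ]
    (d : ℕ) (h : Ω → ℝ) (φ : Ω → Fin d → ℝ)
    (hh : Measurable h) (hφ : Measurable φ)
    (Θ : Set (Fin d → ℝ)) (hΘo : IsOpen Θ) (hΘne : Θ.Nonempty)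
    (hΘD : Θ ⊆ interior {θ : Fin d → ℝ |
      Integrable (fun x => Real.exp (h x + ∑ i, θ i * φ x i)) μ})
    (F : (Fin d → ℝ) → ℝ)
    (hF : ∀ θ, F θ = Real.log (∫ x, Real.exp (h x + ∑ i, θ i * φ x i) ∂μ))
    (p : (Fin d → ℝ) → Ω → ℝ)
    (hp : ∀ θ x, p θ x = Real.exp (h x + ∑ i, θ i * φ x i - F θ)) :
    (∀ θ ∈ Θ, ∀ i j k,
      pderiv' d i (fun θ' => pderiv' d j (fun θ'' => pderiv' d k F θ'') θ') θ
        = ∫ x, (φ x i - pderiv' d i F θ) * (φ x j - pderiv' d j F θ)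
            * (φ x k - pderiv' d k F θ) * p θ x ∂μ) ∧
    (∀ α : ℝ, ∀ θ ∈ Θ, ∀ i j k,
      ∫ x, ((pderiv' d i (fun θ' =>
              pderiv' d j (fun θ'' => h x + ∑ m, θ'' m * φ x m - F θ'') θ') θ)
            + ((1 - α) / 2)
              * (pderiv' d i (fun θ' => h x + ∑ m, θ' m * φ x m - F θ') θ)
              * (pderiv' d j (fun θ' => h x + ∑ m, θ' m * φ x m - F θ') θ))
          * (pderiv' d k (fun θ' => h x + ∑ m, θ' m * φ x m - F θ') θ) * p θ x ∂μ
        = ((1 - α) / 2)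
            * pderiv' d i (fun θ' => pderiv' d j (fun θ'' => pderiv' d k F θ'') θ') θ) := by
  classical
  by_cases hμ : μ = 0
  · subst hμ
    have hFf : F = fun _ => (0:ℝ) := funext fun θ' => by
      rw [hF θ', integral_zero_measure, Real.log_zero]
    have hdk : ∀ k : Fin d, (fun θ'' => pderiv' d k F θ'') = fun _ => (0:ℝ) := by
      intro k; funext θ''; rw [hFf]; simp [pderiv']
    have htriple : ∀ i j k : Fin d, ∀ θ,
        pderiv' d i (fun θ' => pderiv' d j (fun θ'' => pderiv' d k F θ'') θ') θ = 0 := by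
      intro i j k θ
      have h2 : (fun θ' => pderiv' d j (fun θ'' => pderiv' d k F θ'') θ') = fun _ => (0:ℝ) := by
        funext θ'; rw [hdk k]; simp [pderiv']
      rw [h2]; simp [pderiv']
    constructor
    · intro θ hθ i j k
      rw [htriple i j k θ]
      simp
    · intro α θ hθ i j k
      rw [htriple i j k θ]
      simp
  · -- nonzero measure
    have hmem : ∀ θ ∈ Θ, θ ∈ interior {θ' : Fin d → ℝ | Integrable (eE d h φ θ') μ} :=
      fun θ hθ => hΘD hθ
    constructor
    · intro θ hθΘ i j k
      have hθ := hmem θ hθΘ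
      have hDθ : Integrable (eE d h φ θ) μ := by simpa using interior_subset hθ
      have hZpos := Z_pos hμ hDθ
      have hpx : ∀ x, p θ x = eE d h φ θ x * (∫ y, eE d h φ θ y ∂μ)⁻¹ := by
        intro x
        rw [hp θ x, Real.exp_sub, hF θ, Real.exp_log (by exact hZpos), div_eq_mul_inv]
        rfl
      have hRHS : (∫ x, (φ x i - pderiv' d i F θ) * (φ x j - pderiv' d j F θ)
            * (φ x k - pderiv' d k F θ) * p θ x ∂μ)
          = (∫ x, (φ x i - pderiv' d i F θ) * (φ x j - pderiv' d j F θ)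
              * (φ x k - pderiv' d k F θ) * eE d h φ θ x ∂μ)
            * (∫ y, eE d h φ θ y ∂μ)⁻¹ := by
        rw [intc _ (fun x => ((φ x i - pderiv' d i F θ) * (φ x j - pderiv' d j F θ)
            * (φ x k - pderiv' d k F θ) * eE d h φ θ x) * (∫ y, eE d h φ θ y ∂μ)⁻¹)
          (fun x => by rw [hpx x]; ring)]
        exact integral_mul_const _ _
      rw [hRHS, (expand hh hφ hθ i j k _ _ _).2, pderiv3_F hh hφ hμ hF hθ i j k,
        pderiv_F hh hφ hμ hF hθ i, pderiv_F hh hφ hμ hF hθ j, pderiv_F hh hφ hμ hF hθ k]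
      rw [intc (fun x => φ x k * φ x j * φ x i * eE d h φ θ x)
            (fun x => φ x i * φ x j * φ x k * eE d h φ θ x) (fun x => by ring),
          intc (fun x => φ x k * φ x j * eE d h φ θ x)
            (fun x => φ x j * φ x k * eE d h φ θ x) (fun x => by ring),
          intc (fun x => φ x j * φ x i * eE d h φ θ x)
            (fun x => φ x i * φ x j * eE d h φ θ x) (fun x => by ring),
          intc (fun x => φ x k * φ x i * eE d h φ θ x)
            (fun x => φ x i * φ x k * eE d h φ θ x) (fun x => by ring)]
      field_simp
      ring
    · intro α θ hθΘ i j k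
      have hθ := hmem θ hθΘ
      have hDθ : Integrable (eE d h φ θ) μ := by simpa using interior_subset hθ
      have hZpos := Z_pos hμ hDθ
      have hpx : ∀ x, p θ x = eE d h φ θ x * (∫ y, eE d h φ θ y ∂μ)⁻¹ := by
        intro x
        rw [hp θ x, Real.exp_sub, hF θ, Real.exp_log (by exact hZpos), div_eq_mul_inv]
        rfl
      set Z := ∫ y, eE d h φ θ y ∂μ with hZ
      set Qi := (∫ y, φ y i * eE d h φ θ y ∂μ) / Z with hQi
      set Qj := (∫ y, φ y j * eE d h φ θ y ∂μ) / Z with hQj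
      set Qk := (∫ y, φ y k * eE d h φ θ y ∂μ) / Z with hQk
      set S := (∫ y, φ y j * φ y i * eE d h φ θ y ∂μ) / Z
        - (∫ y, φ y j * eE d h φ θ y ∂μ) * (∫ y, φ y i * eE d h φ θ y ∂μ) / Z ^ 2 with hS
      set cα := (1 - α) / 2 with hcα
      have hint1 : Integrable (fun x => (φ x i - Qi) * (φ x j - Qj) * (φ x k - Qk)
          * eE d h φ θ x) μ := (expand hh hφ hθ i j k Qi Qj Qk).1
      have hI1k : Integrable (fun x => φ x k * eE d h φ θ x) μ :=
        (key hh hφ hθ _ ((measurable_pi_apply k).comp hφ) 1 1 (bd1 k)).1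
      have hA : Integrable (fun x => (cα * Z⁻¹) * ((φ x i - Qi) * (φ x j - Qj) * (φ x k - Qk)
          * eE d h φ θ x)) μ := hint1.const_mul _
      have hB1 : Integrable (fun x => φ x k * eE d h φ θ x - Qk * eE d h φ θ x) μ :=
        hI1k.sub (hDθ.const_mul Qk)
      have hB : Integrable (fun x => (-S * Z⁻¹) * (φ x k * eE d h φ θ x
          - Qk * eE d h φ θ x)) μ := hB1.const_mul _
      have hLHS : (∫ x, ((pderiv' d i (fun θ' =>
              pderiv' d j (fun θ'' => h x + ∑ m, θ'' m * φ x m - F θ'') θ') θ)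
            + cα * (pderiv' d i (fun θ' => h x + ∑ m, θ' m * φ x m - F θ') θ)
              * (pderiv' d j (fun θ' => h x + ∑ m, θ' m * φ x m - F θ') θ))
          * (pderiv' d k (fun θ' => h x + ∑ m, θ' m * φ x m - F θ') θ) * p θ x ∂μ)
          = ∫ x, ((cα * Z⁻¹) * ((φ x i - Qi) * (φ x j - Qj) * (φ x k - Qk) * eE d h φ θ x)
              + (-S * Z⁻¹) * (φ x k * eE d h φ θ x - Qk * eE d h φ θ x)) ∂μ := by
        refine intc _ _ fun x => ?_
        rw [pderiv2_ell hh hφ hμ hF hθ x i j, pderiv_ell hh hφ hμ hF hθ x i,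
          pderiv_ell hh hφ hμ hF hθ x j, pderiv_ell hh hφ hμ hF hθ x k, hpx x,
          ← hZ, ← hQi, ← hQj, ← hQk, ← hS]
        ring
      rw [hLHS, integral_add hA hB, integral_const_mul, integral_const_mul,
        integral_sub hI1k (hDθ.const_mul Qk), integral_const_mul,
        (expand hh hφ hθ i j k Qi Qj Qk).2, pderiv3_F hh hφ hμ hF hθ i j k]
      rw [intc (fun x => φ x k * φ x j * φ x i * eE d h φ θ x)
            (fun x => φ x i * φ x j * φ x k * eE d h φ θ x) (fun x => by ring),
          intc (fun x => φ x k * φ x j * eE d h φ θ x)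
            (fun x => φ x j * φ x k * eE d h φ θ x) (fun x => by ring),
          intc (fun x => φ x j * φ x i * eE d h φ θ x)
            (fun x => φ x i * φ x j * eE d h φ θ x) (fun x => by ring),
          intc (fun x => φ x k * φ x i * eE d h φ θ x)
            (fun x => φ x i * φ x k * eE d h φ θ x) (fun x => by ring)]
      rw [hS, hQi, hQj, hQk]
      have hZne : Z ≠ 0 := hZpos.ne'
      rw [← hZ]
      field_simp
      ring
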